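/- The exponential generating function Σ_{n≥0} Q_n(x)·t^n/n! equals 1/(cos(t) − x·sin(t)), for real x and t with cos(t) − x·sin(t) > 0 in a neighborhood of t = 0. -/

import Mathlib

open Polynomial Filter Topology

noncomputable def secDerivPoly : ℕ → Polynomial ℝ
  | 0 => 1
  | n + 1 => (1 + X ^ 2) * derivative (secDerivPoly n) + X * secDerivPoly n

private lemma analyticAt_cos' (z : ℝ) : AnalyticAt ℝ Real.cos z := by
  have hc : AnalyticAt ℂ Complex.cos (z : ℂ) := by
    exact (Complex.analyticOnNhd_univ_iff_differentiable.mpr Complex.differentiable_cos) _ trivial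
  have h1 : AnalyticAt ℝ (fun t : ℝ => Complex.cos (t : ℂ)) z :=
    (hc.restrictScalars).comp (Complex.ofRealCLM.analyticAt z)
  have h2 : AnalyticAt ℝ (fun t : ℝ => (Complex.cos (t : ℂ)).re) z :=
    (Complex.reCLM.analyticAt _).comp h1
  refine h2.congr ?_
  filter_upwards with t
  rw [Complex.cos_ofReal_re]

private lemma analyticAt_sin' (z : ℝ) : AnalyticAt ℝ Real.sin z := by
  have hc : AnalyticAt ℂ Complex.sin (z : ℂ) := by
    exact (Complex.analyticOnNhd_univ_iff_differentiable.mpr Complex.differentiable_sin) _ trivial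
  have h1 : AnalyticAt ℝ (fun t : ℝ => Complex.sin (t : ℂ)) z :=
    (hc.restrictScalars).comp (Complex.ofRealCLM.analyticAt z)
  have h2 : AnalyticAt ℝ (fun t : ℝ => (Complex.sin (t : ℂ)).re) z :=
    (Complex.reCLM.analyticAt _).comp h1
  refine h2.congr ?_
  filter_upwards with t
  rw [Complex.sin_ofReal_re]

private lemma secDerivPoly_hasDerivAt (x : ℝ) (n : ℕ) (t : ℝ)
    (ht : Real.cos t - x * Real.sin t ≠ 0) :
    HasDerivAt
      (fun t =>
        (secDerivPoly n).eval ((Real.sin t + x * Real.cos t) / (Real.cos t - x * Real.sin t)) *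
          (Real.cos t - x * Real.sin t)⁻¹)
      ((secDerivPoly (n + 1)).eval
          ((Real.sin t + x * Real.cos t) / (Real.cos t - x * Real.sin t)) *
        (Real.cos t - x * Real.sin t)⁻¹) t := by
  set c : ℝ → ℝ := fun t => Real.cos t - x * Real.sin t with hcdef
  set s : ℝ → ℝ := fun t => Real.sin t + x * Real.cos t with hsdef
  have hc : HasDerivAt c (-(s t)) t := by
    have := (Real.hasDerivAt_cos t).sub ((Real.hasDerivAt_sin t).const_mul x)
    refine this.congr_deriv ?_
    simp only [hsdef]; ring
  have hs : HasDerivAt s (c t) t := by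
    have := (Real.hasDerivAt_sin t).add ((Real.hasDerivAt_cos t).const_mul x)
    refine this.congr_deriv ?_
    simp only [hcdef]; ring
  have hw : HasDerivAt (fun t => s t / c t)
      ((c t * c t - s t * -(s t)) / c t ^ 2) t := hs.div hc ht
  have hw' : HasDerivAt (fun t => s t / c t) (1 + (s t / c t) ^ 2) t := by
    refine hw.congr_deriv ?_
    have hct : c t ≠ 0 := ht
    field_simp
    ring
  have hf : HasDerivAt (fun t => (c t)⁻¹) (s t / c t * (c t)⁻¹) t := by
    have := hc.inv ht
    refine this.congr_deriv ?_
    rw [neg_neg]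
    ring
  have hQ : HasDerivAt (fun t => (secDerivPoly n).eval (s t / c t))
      ((derivative (secDerivPoly n)).eval (s t / c t) * (1 + (s t / c t) ^ 2)) t :=
    by have := (Polynomial.hasDerivAt (secDerivPoly n) (s t / c t)).comp t hw'; exact this
  have := hQ.mul hf
  refine this.congr_deriv (Eq.symm ?_)
  show (secDerivPoly (n + 1)).eval (s t / c t) * (c t)⁻¹ = _
  rw [secDerivPoly]
  simp only [eval_add, eval_mul, eval_one, eval_pow, eval_X]
  ring

private lemma secDerivPoly_iteratedDeriv (x : ℝ) (n : ℕ) :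
    ∀ t : ℝ, Real.cos t - x * Real.sin t ≠ 0 →
      iteratedDeriv n (fun t => (Real.cos t - x * Real.sin t)⁻¹) t =
        (secDerivPoly n).eval ((Real.sin t + x * Real.cos t) / (Real.cos t - x * Real.sin t)) *
          (Real.cos t - x * Real.sin t)⁻¹ := by
  induction n with
  | zero => intro t ht; simp [secDerivPoly]
  | succ n ih =>
    intro t ht
    have hopen : IsOpen {t : ℝ | Real.cos t - x * Real.sin t ≠ 0} := by
      have : Continuous fun t => Real.cos t - x * Real.sin t := by continuity
      exact isOpen_ne.preimage this
    have hev : iteratedDeriv n (fun t => (Real.cos t - x * Real.sin t)⁻¹) =ᶠ[𝓝 t]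
        fun t =>
          (secDerivPoly n).eval ((Real.sin t + x * Real.cos t) / (Real.cos t - x * Real.sin t)) *
            (Real.cos t - x * Real.sin t)⁻¹ := by
      filter_upwards [hopen.mem_nhds ht] with u hu using ih u hu
    rw [iteratedDeriv_succ, hev.deriv_eq]
    exact (secDerivPoly_hasDerivAt x n t ht).deriv

theorem secDerivPoly_egf (x : ℝ) :
    ∀ᶠ t in 𝓝 (0 : ℝ),
      ∑' n : ℕ, (secDerivPoly n).eval x * t ^ n / (n.factorial : ℝ) =
        1 / (Real.cos t - x * Real.sin t) := by
  set f : ℝ → ℝ := fun t => (Real.cos t - x * Real.sin t)⁻¹ with hfdef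
  have hfa : AnalyticAt ℝ f 0 := by
    have hden : AnalyticAt ℝ (fun t => Real.cos t - x * Real.sin t) 0 :=
      (analyticAt_cos' 0).sub (analyticAt_const.mul (analyticAt_sin' 0))
    refine hden.inv ?_
    simp
  obtain ⟨p, hp⟩ := hfa
  obtain ⟨r, hr⟩ := hp
  have hderiv0 : ∀ n : ℕ, iteratedDeriv n f 0 = (secDerivPoly n).eval x := by
    intro n
    have := secDerivPoly_iteratedDeriv x n 0 (by simp)
    simpa using this
  filter_upwards [EMetric.ball_mem_nhds (0 : ℝ) hr.r_pos] with t htball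
  have hsum := hr.hasSum_iteratedFDeriv (y := t) (by simpa using htball)
  have hsum' : HasSum (fun n : ℕ => (secDerivPoly n).eval x * t ^ n / (n.factorial : ℝ)) (f t) := by
    have h0 : (0 : ℝ) + t = t := by ring
    rw [h0] at hsum
    refine (congrArg (HasSum · (f t)) (funext fun n => ?_ : (fun n : ℕ => (secDerivPoly n).eval x * t ^ n / (n.factorial : ℝ)) = _)).mpr hsum
    rw [iteratedFDeriv_apply_eq_iteratedDeriv_mul_prod, hderiv0 n]
    simp only [Finset.prod_const, Finset.card_univ, Fintype.card_fin, smul_eq_mul]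
    ring
  rw [hsum'.tsum_eq, hfdef, one_div]
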